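/- Let I ⊆ ℝ be a nondegenerate interval and let (F_n)_{n=1}^∞ be a sequence of continuous strictly monotone functions F_n : I → ℝ. Then (F_n) is QA-maximal, i.e. lim_{n→∞} A[F_n](a) = max(a₁,…,a_k) for every k ∈ ℕ and every tuple a ∈ I^k, if and only if lim_{n→∞} (F_n(x) − F_n(y))/(F_n(z) − F_n(y)) = 0 for all x, y, z ∈ I with x < y < z. -/

import Mathlib

open Set Filter Topology

/-- The quasiarithmetic mean generated by `F` on the interval `I`:
`A[F](a₁,…,a_k) = F⁻¹((F(a₁)+⋯+F(a_k))/k)`, where the inverse is taken on `I`. -/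
noncomputable def qaMean (I : Set ℝ) (F : ℝ → ℝ) {k : ℕ} (a : Fin k → ℝ) : ℝ :=
  Function.invFunOn F I ((∑ i, F (a i)) / k)

/-- A sequence of generators is QA-maximal if the associated quasiarithmetic means tend
pointwise to the maximum. -/
def IsQAMaximal (I : Set ℝ) (F : ℕ → ℝ → ℝ) : Prop :=
  ∀ (k : ℕ) (a : Fin (k + 1) → ℝ), (∀ i, a i ∈ I) →
    Tendsto (fun n => qaMean I (F n) a) atTop
      (𝓝 (Finset.univ.sup' Finset.univ_nonempty a))

lemma qaMean_spec (I : Set ℝ) (hI : I.OrdConnected) {F : ℝ → ℝ}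
    (hcont : ContinuousOn F I) {k : ℕ} {a : Fin (k+1) → ℝ} (ha : ∀ i, a i ∈ I) :
    qaMean I F a ∈ I ∧ F (qaMean I F a) = (∑ i, F (a i)) / (k+1) := by
  have hS : (F '' I).OrdConnected := (hI.isPreconnected.image F hcont).ordConnected
  set v : ℝ := (∑ i, F (a i)) / (k+1) with hv
  have hk1 : (0:ℝ) < (k:ℝ) + 1 := by positivity
  obtain ⟨i₁, -, h₁⟩ := Finset.exists_mem_eq_inf' (Finset.univ_nonempty (α := Fin (k+1)))
    (fun i => F (a i))
  obtain ⟨i₂, -, h₂⟩ := Finset.exists_mem_eq_sup' (Finset.univ_nonempty (α := Fin (k+1)))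
    (fun i => F (a i))
  have hlow : (k+1 : ℝ) * F (a i₁) ≤ ∑ i, F (a i) := by
    have := Finset.card_nsmul_le_sum Finset.univ (fun i => F (a i)) (F (a i₁))
      (fun i _ => h₁ ▸ Finset.inf'_le _ (Finset.mem_univ i))
    simpa [nsmul_eq_mul] using this
  have hhigh : ∑ i, F (a i) ≤ (k+1 : ℝ) * F (a i₂) := by
    have := Finset.sum_le_card_nsmul Finset.univ (fun i => F (a i)) (F (a i₂))
      (fun i _ => h₂ ▸ Finset.le_sup' (fun i => F (a i)) (Finset.mem_univ i))
    simpa [nsmul_eq_mul] using this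
  have hvmem : v ∈ F '' I := by
    apply hS.out ⟨a i₁, ha i₁, rfl⟩ ⟨a i₂, ha i₂, rfl⟩
    constructor
    · rw [hv, le_div_iff₀ hk1]; linarith
    · rw [hv, div_le_iff₀ hk1]; linarith
  obtain ⟨w, hwI, hwv⟩ := hvmem
  have hex : ∃ w ∈ I, F w = v := ⟨w, hwI, hwv⟩
  have hq : qaMean I F a = Function.invFunOn F I v := by
    simp only [qaMean, hv]; norm_num
  rw [hq]
  exact ⟨Function.invFunOn_mem hex, Function.invFunOn_eq hex⟩

set_option maxHeartbeats 1600000 in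
/-- A sequence `(F_n)` of continuous strictly monotone functions on `I` is QA-maximal iff
`(F_n(x) - F_n(y))/(F_n(z) - F_n(y)) → 0` for all `x < y < z` in `I`. -/
theorem stmt_18 (I : Set ℝ) (hI : I.OrdConnected) (hInt : I.Nontrivial)
    (F : ℕ → ℝ → ℝ)
    (hcont : ∀ n, ContinuousOn (F n) I)
    (hmono : ∀ n, StrictMonoOn (F n) I ∨ StrictAntiOn (F n) I) :
    IsQAMaximal I F ↔
    (∀ x ∈ I, ∀ y ∈ I, ∀ z ∈ I, x < y → y < z →
      Tendsto (fun n => (F n x - F n y) / (F n z - F n y)) atTop (𝓝 0)) := by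
  constructor
  · -- QA-maximal → ratio tends to 0
    intro hQA x hx y hy z hz hxy hyz
    rw [NormedAddCommGroup.tendsto_nhds_zero]
    intro ε hε
    obtain ⟨k, hk⟩ := exists_nat_gt (1/ε)
    have hk0 : (0:ℝ) < (k:ℝ) := lt_trans (by positivity) hk
    have hk' : 1 < (k:ℝ) * ε := (div_lt_iff₀ hε).mp hk
    set a : Fin (k+1) → ℝ := fun i => if i = Fin.last k then z else x with haa
    have ha : ∀ i, a i ∈ I := fun i => by
      by_cases h : i = Fin.last k <;> simp [a, h, hz, hx]
    have hsup : Finset.univ.sup' Finset.univ_nonempty a = z := by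
      apply le_antisymm
      · apply Finset.sup'_le
        intro i _
        by_cases h : i = Fin.last k <;> simp [a, h]
        exact (hxy.trans hyz).le
      · exact le_trans (by simp [a]) (Finset.le_sup' a (Finset.mem_univ (Fin.last k)))
    have hsum : ∀ n, ∑ i, F n (a i) = k * F n x + F n z := by
      intro n
      have h1 : ∀ i : Fin k, F n (a i.castSucc) = F n x := fun i => by
        rw [haa]; simp [(Fin.castSucc_lt_last i).ne]
      have h2 : a (Fin.last k) = z := by rw [haa]; simp
      rw [Fin.sum_univ_castSucc, Finset.sum_congr rfl (fun i _ => h1 i), h2,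
        Finset.sum_const, Finset.card_univ, Fintype.card_fin, nsmul_eq_mul]
    have htend := hQA k a ha
    rw [hsup] at htend
    filter_upwards [htend.eventually (eventually_gt_nhds hyz)] with n hn
    obtain ⟨hqI, hqF⟩ := qaMean_spec I hI (hcont n) ha
    rw [hsum n] at hqF
    rcases hmono n with hm | hm
    · have h1 : F n y < F n (qaMean I (F n) a) := hm hy hqI hn
      rw [hqF, lt_div_iff₀ (by positivity)] at h1
      have hxy' : F n x < F n y := hm hx hy hxy
      have hyz' : F n y < F n z := hm hy hz hyz
      rw [Real.norm_eq_abs, abs_div, abs_of_neg (by linarith), abs_of_pos (by linarith),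
        div_lt_iff₀ (by linarith)]
      nlinarith [mul_lt_mul_of_pos_right hk' (sub_pos.mpr hxy')]
    · have h1 : F n (qaMean I (F n) a) < F n y := hm hy hqI hn
      rw [hqF, div_lt_iff₀ (by positivity)] at h1
      have hxy' : F n y < F n x := hm hx hy hxy
      have hyz' : F n z < F n y := hm hy hz hyz
      rw [Real.norm_eq_abs, abs_div, abs_of_pos (by linarith), abs_of_neg (by linarith),
        div_lt_iff₀ (by linarith)]
      nlinarith [mul_lt_mul_of_pos_right hk' (sub_pos.mpr hxy')]
  · -- ratio tends to 0 → QA-maximal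
    intro h k a ha
    set M := Finset.univ.sup' Finset.univ_nonempty a with hMdef
    set m := Finset.univ.inf' Finset.univ_nonempty a with hmdef
    obtain ⟨iM, -, hiM⟩ := Finset.exists_mem_eq_sup' (Finset.univ_nonempty (α := Fin (k+1))) a
    obtain ⟨im, -, him⟩ := Finset.exists_mem_eq_inf' (Finset.univ_nonempty (α := Fin (k+1))) a
    have hMI : M ∈ I := by rw [hMdef, hiM]; exact ha iM
    have hmI : m ∈ I := by rw [hmdef, him]; exact ha im
    have hmle : ∀ i, m ≤ a i := fun i => Finset.inf'_le a (Finset.mem_univ i)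
    have hleM : ∀ i, a i ≤ M := fun i => Finset.le_sup' a (Finset.mem_univ i)
    have hmM : m ≤ M := (hmle iM).trans (hleM iM) |>.trans_eq rfl
    -- upper bound valid for every n
    have hub : ∀ n, qaMean I (F n) a ≤ M := by
      intro n
      obtain ⟨hqI, hqF⟩ := qaMean_spec I hI (hcont n) ha
      rcases hmono n with hm' | hm'
      · by_contra hgt
        push_neg at hgt
        have h2 : F n M < F n (qaMean I (F n) a) := hm' hMI hqI hgt
        rw [hqF] at h2
        have h3 : ∑ i, F n (a i) ≤ (k+1:ℝ) * F n M := by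
          have := Finset.sum_le_card_nsmul Finset.univ (fun i => F n (a i)) (F n M)
            (fun i _ => hm'.monotoneOn (ha i) hMI (hleM i))
          simpa [nsmul_eq_mul] using this
        rw [lt_div_iff₀ (by positivity)] at h2
        linarith
      · by_contra hgt
        push_neg at hgt
        have h2 : F n (qaMean I (F n) a) < F n M := hm' hMI hqI hgt
        rw [hqF] at h2
        have h3 : (k+1:ℝ) * F n M ≤ ∑ i, F n (a i) := by
          have := Finset.card_nsmul_le_sum Finset.univ (fun i => F n (a i)) (F n M)
            (fun i _ => hm'.antitoneOn (ha i) hMI (hleM i))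
          simpa [nsmul_eq_mul] using this
        rw [div_lt_iff₀ (by positivity)] at h2
        linarith
    rcases eq_or_lt_of_le hmM with heq | hlt
    · -- all entries equal M : the mean is constantly M
      have hall : ∀ i, a i = M := fun i => le_antisymm (hleM i) (heq ▸ hmle i)
      have hconst : (fun n => qaMean I (F n) a) = fun _ => M := by
        funext n
        obtain ⟨hqI, hqF⟩ := qaMean_spec I hI (hcont n) ha
        have hFeq : F n (qaMean I (F n) a) = F n M := by
          rw [hqF]
          have : ∑ i, F n (a i) = (k+1:ℝ) * F n M := by
            simp [hall, Finset.sum_const, mul_comm]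
          rw [this]
          field_simp
        rcases hmono n with hm' | hm'
        · exact hm'.injOn hqI hMI hFeq
        · exact hm'.injOn hqI hMI hFeq
      rw [hconst]
      exact tendsto_const_nhds
    · rw [tendsto_order]
      constructor
      · intro b hb
        set c := max b m with hc
        have hcm : m ≤ c := le_max_right b m
        have hcM : c < M := max_lt hb hlt
        set y := (c + M) / 2 with hydef
        have hcy : c < y := by rw [hydef]; linarith
        have hyM : y < M := by rw [hydef]; linarith
        have hyI : y ∈ I := hI.out hmI hMI ⟨by linarith, hyM.le⟩
        have hmy : m < y := lt_of_le_of_lt hcm hcy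
        have hby : b < y := lt_of_le_of_lt (le_max_left b m) hcy
        have hr := h m hmI y hyI M hMI hmy hyM
        have hev := (NormedAddCommGroup.tendsto_nhds_zero.mp hr) (1/(k+1)) (by positivity)
        filter_upwards [hev] with n hn
        obtain ⟨hqI, hqF⟩ := qaMean_spec I hI (hcont n) ha
        rcases hmono n with hm' | hm'
        · have hmy' : F n m < F n y := hm' hmI hyI hmy
          have hyM' : F n y < F n M := hm' hyI hMI hyM
          rw [Real.norm_eq_abs, abs_div, abs_of_neg (by linarith), abs_of_pos (by linarith),
            div_lt_div_iff₀ (by linarith) (by positivity)] at hn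
          -- hn : (F n y - F n m) * (k+1) < (F n M - F n y) * 1
          have hsum : (k:ℝ) * F n m + F n M ≤ ∑ i, F n (a i) := by
            have heq : F n (a iM) + ∑ i ∈ Finset.univ.erase iM, F n (a i)
                = ∑ i, F n (a i) :=
              Finset.add_sum_erase Finset.univ (fun i => F n (a i)) (Finset.mem_univ iM)
            have hcard : (Finset.univ.erase iM).card = k := by
              simp [Finset.card_erase_of_mem]
            have hbd := Finset.card_nsmul_le_sum (Finset.univ.erase iM)
              (fun i => F n (a i)) (F n m)
              (fun i _ => hm'.monotoneOn hmI (ha i) (hmle i))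
            rw [hcard, nsmul_eq_mul] at hbd
            have haiM : F n (a iM) = F n M := by rw [← hiM]
            rw [← heq, haiM]
            linarith
          have hvy : F n y < F n (qaMean I (F n) a) := by
            rw [hqF, lt_div_iff₀ (by positivity)]
            have hkk : (k:ℝ) * (F n y - F n m) ≤ ((k:ℝ)+1) * (F n y - F n m) := by
              nlinarith [sub_pos.mpr hmy']
            nlinarith
          have : y < qaMean I (F n) a := by
            by_contra hle
            push_neg at hle
            exact absurd (hm'.monotoneOn hqI hyI hle) (not_le.mpr hvy)
          linarith
        · have hmy' : F n y < F n m := hm' hmI hyI hmy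
          have hyM' : F n M < F n y := hm' hyI hMI hyM
          rw [Real.norm_eq_abs, abs_div, abs_of_pos (by linarith), abs_of_neg (by linarith),
            div_lt_div_iff₀ (by linarith) (by positivity)] at hn
          have hsum : ∑ i, F n (a i) ≤ (k:ℝ) * F n m + F n M := by
            have heq : F n (a iM) + ∑ i ∈ Finset.univ.erase iM, F n (a i)
                = ∑ i, F n (a i) :=
              Finset.add_sum_erase Finset.univ (fun i => F n (a i)) (Finset.mem_univ iM)
            have hcard : (Finset.univ.erase iM).card = k := by
              simp [Finset.card_erase_of_mem]
            have hbd := Finset.sum_le_card_nsmul (Finset.univ.erase iM)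
              (fun i => F n (a i)) (F n m)
              (fun i _ => hm'.antitoneOn hmI (ha i) (hmle i))
            rw [hcard, nsmul_eq_mul] at hbd
            have haiM : F n (a iM) = F n M := by rw [← hiM]
            rw [← heq, haiM]
            linarith
          have hvy : F n (qaMean I (F n) a) < F n y := by
            rw [hqF, div_lt_iff₀ (by positivity)]
            have hkk : (k:ℝ) * (F n m - F n y) ≤ ((k:ℝ)+1) * (F n m - F n y) := by
              nlinarith [sub_pos.mpr hmy']
            nlinarith
          have : y < qaMean I (F n) a := by
            by_contra hle
            push_neg at hle
            exact absurd (hm'.antitoneOn hqI hyI hle) (not_le.mpr hvy)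
          linarith
      · intro b hb
        filter_upwards with n
        exact lt_of_le_of_lt (hub n) hb
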